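/- Let F be a field of characteristic zero and let h, j : ℕ → F be sequences with h 0 = 1 and j 1 = 1 satisfying equation (D1): n·h_n = Σ_{r=1}^{n} j_r · h_{n-r} for all n ≥ 1. For n ≥ 1 let J_n(j̄) be the n×n matrix over F whose entry in row i and column k (1 ≤ i,k ≤ n) equals j_{i-k+1} if k ≤ i, equals -i if k = i+1, and equals 0 if k > i+1. Then for all n ≥ 1: det(J_n(j̄)) = 0 if and only if h_n = 0; equivalently, 0 is an eigenvalue of J_n(j̄) if and only if h_n = 0. -/

import Mathlib

/-- The matrix `J_n(j̄)`: entries `j (i - k + 1)` in (1-based) row `i`, column `k` for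
`k ≤ i`, superdiagonal entry `-i` in row `i`, column `i + 1`, and `0` above the
superdiagonal. -/
def Jmat {F : Type*} [Field F] (j : ℕ → F) (n : ℕ) : Matrix (Fin n) (Fin n) F :=
  Matrix.of fun i k =>
    if (k : ℕ) ≤ (i : ℕ) then j ((i : ℕ) - (k : ℕ) + 1)
    else if (k : ℕ) = (i : ℕ) + 1 then -(((i : ℕ) + 1 : ℕ) : F)
    else 0

open Finset in
lemma Jmat_mulVec {F : Type*} [Field F] (j : ℕ → F) (n : ℕ) (v : ℕ → F) (i : Fin n) :
    (Jmat j n).mulVec (fun k : Fin n => v k) i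
      = (∑ r ∈ Finset.Icc 1 ((i : ℕ) + 1), j r * v ((i : ℕ) + 1 - r))
        - (if (i : ℕ) + 1 < n then (((i : ℕ) + 1 : ℕ) : F) * v ((i : ℕ) + 1) else 0) := by
  classical
  set m := (i : ℕ) with hm
  have hmn : m < n := i.isLt
  have hsum : (Jmat j n).mulVec (fun k : Fin n => v k) i
      = ∑ k ∈ range n, (if k ≤ m then j (m - k + 1)
          else if k = m + 1 then -((m + 1 : ℕ) : F) else 0) * v k := by
    simp only [Matrix.mulVec, dotProduct, Jmat, Matrix.of_apply]
    rw [Fin.sum_univ_eq_sum_range (fun k =>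
      (if k ≤ m then j (m - k + 1) else if k = m + 1 then -((m + 1 : ℕ) : F) else 0) * v k) n]
  rw [hsum]
  rw [range_eq_Ico, ← Finset.sum_Ico_consecutive _ (Nat.zero_le (m+1)) hmn]
  have h1 : ∑ k ∈ Ico 0 (m+1), (if k ≤ m then j (m - k + 1)
        else if k = m + 1 then -((m + 1 : ℕ) : F) else 0) * v k
      = ∑ r ∈ Finset.Icc 1 (m + 1), j r * v (m + 1 - r) := by
    rw [← range_eq_Ico]
    rw [show Finset.Icc 1 (m+1) = Finset.Ico 1 (m+2) from by rw [← Finset.Ico_add_one_right_eq_Icc]; rfl,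
      Finset.sum_Ico_eq_sum_range]
    simp only [show m + 2 - 1 = m + 1 from rfl]
    rw [← Finset.sum_range_reflect (fun k => j (1 + k) * v (m + 1 - (1 + k))) (m+1)]
    refine Finset.sum_congr rfl fun k hk => ?_
    rw [Finset.mem_range] at hk
    have hk' : k ≤ m := Nat.lt_succ_iff.mp hk
    rw [if_pos hk']
    congr 1
    · congr 1; omega
    · congr 1; omega
  have h2 : ∑ k ∈ Ico (m+1) n, (if k ≤ m then j (m - k + 1)
        else if k = m + 1 then -((m + 1 : ℕ) : F) else 0) * v k
      = -(if m + 1 < n then ((m + 1 : ℕ) : F) * v (m + 1) else 0) := by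
    have : ∀ k ∈ Ico (m+1) n, (if k ≤ m then j (m - k + 1)
        else if k = m + 1 then -((m + 1 : ℕ) : F) else 0) * v k
        = if k = m + 1 then -(((m + 1 : ℕ) : F) * v (m+1)) else 0 := by
      intro k hk
      rw [Finset.mem_Ico] at hk
      rw [if_neg (by omega)]
      by_cases hkm : k = m + 1
      · subst hkm; rw [if_pos rfl, if_pos rfl]; push_cast; ring
      · simp [hkm]
    rw [Finset.sum_congr rfl this]
    simp only [Finset.sum_ite_eq' (Ico (m+1) n) (m+1), Finset.mem_Ico]
    by_cases hc : m + 1 < n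
    · rw [if_pos ⟨le_refl _, hc⟩, if_pos hc]
    · rw [if_neg (by omega), if_neg hc]; simp
  rw [h1, h2]; ring

/-- Over a field of characteristic zero, if `h 0 = 1`, `j 1 = 1` and (D1) holds, then
for all `n ≥ 1`: `det (J_n(j̄)) = 0 ↔ h n = 0`; equivalently, `0` is an eigenvalue of
`J_n(j̄)` iff `h n = 0`. -/
theorem det_Jmat_eq_zero_iff {F : Type*} [Field F] [CharZero F] (h j : ℕ → F)
    (h0 : h 0 = 1) (j1 : j 1 = 1)
    (hD : ∀ n : ℕ, 1 ≤ n → n • h n = ∑ r ∈ Finset.Icc 1 n, j r * h (n - r)) :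
    ∀ n : ℕ, 1 ≤ n →
      (((Jmat j n).det = 0 ↔ h n = 0) ∧
        (Module.End.HasEigenvalue (Matrix.toLin' (Jmat j n)) 0 ↔ h n = 0)) := by
  intro n hn
  classical
  -- key: existence of nonzero kernel vector iff h n = 0
  have key : (∃ v ≠ 0, (Jmat j n).mulVec v = 0) ↔ h n = 0 := by
    constructor
    · rintro ⟨v, hv0, hv⟩
      set w : ℕ → F := fun k => if hk : k < n then v ⟨k, hk⟩ else 0 with hw
      have hvw : v = fun k : Fin n => w k := by
        funext k; simp [hw, k.isLt]
      have hmv : ∀ i : Fin n, (Jmat j n).mulVec (fun k : Fin n => w k) i = 0 := by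
        intro i; rw [← hvw, hv]; rfl
      -- w m = w 0 * h m for all m < n
      have hwh : ∀ m, m < n → w m = w 0 * h m := by
        intro m
        induction m using Nat.strong_induction_on with
        | _ m ih =>
          intro hmn
          match m with
          | 0 => simp [h0]
          | m + 1 =>
            have hrow := hmv ⟨m, by omega⟩
            rw [Jmat_mulVec] at hrow
            simp only [if_pos hmn] at hrow
            have hsum : ∑ r ∈ Finset.Icc 1 (m + 1), j r * w (m + 1 - r)
                = w 0 * ((m + 1 : ℕ) • h (m + 1)) := by
              rw [hD (m+1) (by omega), Finset.mul_sum]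
              refine Finset.sum_congr rfl fun r hr => ?_
              rw [Finset.mem_Icc] at hr
              rw [ih (m + 1 - r) (by omega) (by omega)]
              ring
            rw [hsum] at hrow
            have hm1 : ((m + 1 : ℕ) : F) ≠ 0 := Nat.cast_ne_zero.mpr (by omega)
            have heq := sub_eq_zero.mp hrow
            rw [nsmul_eq_mul] at heq
            have h2 : ((m + 1 : ℕ) : F) * w (m + 1) = ((m + 1 : ℕ) : F) * (w 0 * h (m + 1)) := by
              push_cast at heq ⊢
              linear_combination -heq
            exact mul_left_cancel₀ hm1 h2
      have hw0 : w 0 ≠ 0 := by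
        intro hw0
        apply hv0
        funext k
        have := hwh k k.isLt
        rw [hw0, zero_mul] at this
        have : v k = 0 := by
          have hk := k.isLt
          simpa [hw, hk] using this
        simpa using this
      -- last row
      have hlast := hmv ⟨n - 1, by omega⟩
      rw [Jmat_mulVec] at hlast
      simp only [show n - 1 + 1 = n by omega, lt_irrefl, if_false] at hlast
      have hsum : ∑ r ∈ Finset.Icc 1 n, j r * w (n - r) = w 0 * (n • h n) := by
        rw [hD n hn, Finset.mul_sum]
        refine Finset.sum_congr rfl fun r hr => ?_
        rw [Finset.mem_Icc] at hr
        rw [hwh (n - r) (by omega)]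
        ring
      rw [hsum, sub_zero] at hlast
      rw [nsmul_eq_mul] at hlast
      have hn0 : ((n : ℕ) : F) ≠ 0 := Nat.cast_ne_zero.mpr (by omega)
      rcases mul_eq_zero.mp hlast with h1 | h1
      · exact absurd h1 hw0
      · rcases mul_eq_zero.mp h1 with h2 | h2
        · exact absurd h2 hn0
        · exact h2
    · intro hhn
      refine ⟨fun k : Fin n => h k, ?_, ?_⟩
      · intro hv
        have : h ((⟨0, by omega⟩ : Fin n) : ℕ) = 0 := congrFun hv ⟨0, by omega⟩
        rw [h0] at this
        exact one_ne_zero this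
      · funext i
        rw [Jmat_mulVec j n h i]
        by_cases hc : (i : ℕ) + 1 < n
        · rw [if_pos hc, ← hD ((i : ℕ) + 1) (by omega), nsmul_eq_mul]
          simp
        · have hi : (i : ℕ) + 1 = n := by have := i.isLt; omega
          rw [if_neg hc, hi, ← hD n hn, hhn]
          simp
  constructor
  · rw [← Matrix.exists_mulVec_eq_zero_iff]
    exact key
  · rw [Module.End.hasEigenvalue_iff, Module.End.eigenspace_zero, Submodule.ne_bot_iff]
    rw [← key]
    constructor
    · rintro ⟨v, hv, hv0⟩
      exact ⟨v, hv0, by simpa [Matrix.toLin'_apply] using hv⟩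
    · rintro ⟨v, hv0, hv⟩
      exact ⟨v, by simpa [Matrix.toLin'_apply, LinearMap.mem_ker] using hv, hv0⟩
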